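/- For every y ∈ Y one has ‖A^{1/2} y‖ = ‖P₀ y‖ and ‖(1 − A)^{1/2} y‖ = ‖P₁ y‖, where A^{1/2} and (1 − A)^{1/2} are the positive square roots of A and 1 − A. Moreover, there exist isometric isomorphisms (unitaries) u₀ : Z₀ → Z and u₁ : Z₁ → Z such that A^{1/2} z = u₀(P₀ z) and (1 − A)^{1/2} z = u₁(P₁ z) for all z ∈ Z. -/

import Mathlib

open scoped InnerProductSpace

variable {H₀ H₁ : Type*} [NormedAddCommGroup H₀] [InnerProductSpace ℂ H₀] [CompleteSpace H₀]
  [NormedAddCommGroup H₁] [InnerProductSpace ℂ H₁] [CompleteSpace H₁]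

/-- First coordinate projection `H₀ ⊕₂ H₁ → H₀` as a linear map. -/
noncomputable def P0 : WithLp 2 (H₀ × H₁) →ₗ[ℂ] H₀ :=
  (LinearMap.fst ℂ H₀ H₁) ∘ₗ (WithLp.linearEquiv 2 ℂ (H₀ × H₁)).toLinearMap

/-- Second coordinate projection `H₀ ⊕₂ H₁ → H₁` as a linear map. -/
noncomputable def P1 : WithLp 2 (H₀ × H₁) →ₗ[ℂ] H₁ :=
  (LinearMap.snd ℂ H₀ H₁) ∘ₗ (WithLp.linearEquiv 2 ℂ (H₀ × H₁)).toLinearMap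

/-- Key abstract lemma: if `S` is a symmetric bounded operator on an inner product space `W`
with `‖S y‖ = ‖T y‖` for a linear map `T : W →ₗ K`, `Z` is a complete `S`-invariant submodule
on which `S` is injective, then there is an isometric isomorphism `u` from the closure `Z₀`
of `T(Z)` onto `Z` with `u (T z) = S z` for `z ∈ Z`. -/
private lemma key_lemma {W K : Type*} [NormedAddCommGroup W] [InnerProductSpace ℂ W]
    [NormedAddCommGroup K] [InnerProductSpace ℂ K] [CompleteSpace K]
    (T : W →ₗ[ℂ] K) (S : W →L[ℂ] W)
    (Z : Submodule ℂ W) [CompleteSpace Z]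
    (hnorm : ∀ y : W, ‖S y‖ = ‖T y‖)
    (hsym : ∀ x y : W, ⟪S x, y⟫_ℂ = ⟪x, S y⟫_ℂ)
    (hSZ : ∀ z ∈ Z, S z ∈ Z)
    (hker : ∀ z ∈ Z, S z = 0 → z = 0)
    (Z₀ : Submodule ℂ K) (hZ₀ : Z₀ = (Submodule.map T Z).topologicalClosure) :
    ∃ u : Z₀ ≃ₗᵢ[ℂ] Z, ∀ z : W, z ∈ Z → ∀ h : T z ∈ Z₀,
      ((u ⟨T z, h⟩ : Z) : W) = S z := by
  set M : Submodule ℂ K := Submodule.map T Z with hM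
  haveI : CompleteSpace Z₀ := by
    have hcl : IsClosed (Z₀ : Set K) := by
      rw [hZ₀]; exact M.isClosed_topologicalClosure
    exact hcl.completeSpace_coe
  -- the bijection `b : Z → M`
  let b : Z →ₗ[ℂ] M := LinearMap.codRestrict M (T ∘ₗ Z.subtype)
    (fun z => Submodule.mem_map_of_mem z.2)
  have hbcoe : ∀ z : Z, (b z : K) = T (z : W) := fun z => rfl
  have hTzero : ∀ z : Z, T (z : W) = 0 → (z : W) = 0 := by
    intro z h0
    refine hker _ z.2 ?_
    have h1 := hnorm (z : W)
    rw [h0, norm_zero, norm_eq_zero] at h1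
    exact h1
  have hbinj : Function.Injective b := by
    intro z₁ z₂ h12
    have h0 : T ((z₁ : W) - (z₂ : W)) = 0 := by
      have h1 := congrArg (Subtype.val) h12
      rw [hbcoe, hbcoe] at h1
      rw [map_sub, h1, sub_self]
    have h2 := hTzero (z₁ - z₂) (by simpa using h0)
    rw [Submodule.coe_sub, sub_eq_zero] at h2
    exact Subtype.ext h2
  have hbsurj : Function.Surjective b := by
    rintro ⟨m, hm⟩
    obtain ⟨z, hz, rfl⟩ := Submodule.mem_map.mp hm
    exact ⟨⟨z, hz⟩, Subtype.ext rfl⟩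
  let e : Z ≃ₗ[ℂ] M := LinearEquiv.ofBijective b ⟨hbinj, hbsurj⟩
  -- the restriction `ψ : Z → Z` of `S`
  let ψ : Z →ₗ[ℂ] Z := LinearMap.codRestrict Z ((S : W →ₗ[ℂ] W) ∘ₗ Z.subtype)
    (fun z => hSZ _ z.2)
  have hψcoe : ∀ z : Z, (ψ z : W) = S (z : W) := fun z => rfl
  -- the map `M → Z`, `T z ↦ S z`, as a linear isometry
  let fM : M →ₗᵢ[ℂ] Z :=
    { toLinearMap := ψ ∘ₗ (e.symm : M →ₗ[ℂ] Z)
      norm_map' := by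
        intro m
        have h1 : e (e.symm m) = m := e.apply_symm_apply m
        calc ‖ψ (e.symm m)‖ = ‖S ((e.symm m : Z) : W)‖ := by
              rw [Submodule.coe_norm, hψcoe]
          _ = ‖T ((e.symm m : Z) : W)‖ := hnorm _
          _ = ‖(b (e.symm m) : K)‖ := rfl
          _ = ‖m‖ := by
              rw [show b (e.symm m) = m from h1, ← Submodule.coe_norm] }
  -- the dense isometric inclusion `ι : M → Z₀`
  have hle : M ≤ Z₀ := hZ₀ ▸ M.le_topologicalClosure
  let ιL : M →ₗᵢ[ℂ] Z₀ := ⟨Submodule.inclusion hle, fun x => rfl⟩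
  let ι : M →L[ℂ] Z₀ := ιL.toContinuousLinearMap
  have hι : ∀ m : M, (ι m : K) = (m : K) := fun m => rfl
  have hdense : DenseRange ι := by
    intro x
    have hx : (x : K) ∈ closure (M : Set K) := by
      have h2 : (x : K) ∈ M.topologicalClosure := (le_of_eq hZ₀) x.2
      rwa [← Submodule.topologicalClosure_coe]
    show x ∈ closure (Set.range ι)
    rw [closure_subtype]
    have himg : (Subtype.val '' Set.range ι) = (M : Set K) := by
      ext k
      constructor
      · rintro ⟨y, ⟨m, rfl⟩, rfl⟩
        show (ι m : K) ∈ M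
        rw [hι]; exact m.2
      · intro hk
        exact ⟨ι ⟨k, hk⟩, ⟨⟨k, hk⟩, rfl⟩, rfl⟩
    rw [himg]
    exact hx
  have huni : IsUniformInducing ι := ιL.isometry.isUniformInducing
  -- the extension `F : Z₀ → Z`
  let F : Z₀ →L[ℂ] Z := (fM.toContinuousLinearMap).extend ι
  have hFeq : ∀ m : M, F (ι m) = fM m := fun m =>
    ContinuousLinearMap.extend_eq _ hdense huni m
  have hFiso : ∀ x : Z₀, ‖F x‖ = ‖x‖ := by
    have heq : Set.EqOn (fun x : Z₀ => ‖F x‖) (fun x : Z₀ => ‖x‖) (Set.range ι) := by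
      rintro _ ⟨m, rfl⟩
      show ‖F (ι m)‖ = ‖ι m‖
      rw [hFeq, fM.norm_map]
      exact (ιL.norm_map m).symm
    have h := Continuous.ext_on hdense (F.continuous.norm) continuous_norm heq
    exact fun x => congrFun h x
  let Fi : Z₀ →ₗᵢ[ℂ] Z := ⟨(F : Z₀ →ₗ[ℂ] Z), hFiso⟩
  have hrange : ∀ w : Z, ψ w ∈ Set.range Fi := by
    intro w
    refine ⟨ι (e w), ?_⟩
    show F (ι (e w)) = ψ w
    rw [hFeq]
    show ψ (e.symm (e w)) = ψ w
    rw [e.symm_apply_apply]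
  -- density of the range of ψ in Z
  have hψdense : (LinearMap.range ψ).topologicalClosure = ⊤ := by
    rw [Submodule.topologicalClosure_eq_top_iff, Submodule.eq_bot_iff]
    intro w hw
    have hw' : ∀ v : Z, ⟪ψ v, w⟫_ℂ = 0 := fun v =>
      (Submodule.mem_orthogonal _ _).mp hw (ψ v) (LinearMap.mem_range_self ψ v)
    have h3 : ⟪S (w : W), S (w : W)⟫_ℂ = 0 := by
      have h4 := hw' (ψ w)
      rw [Submodule.coe_inner, hψcoe, hψcoe] at h4
      exact (hsym (S (w : W)) (w : W)).symm.trans h4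
    have h5 : S (w : W) = 0 := inner_self_eq_zero.mp h3
    exact Subtype.ext (hker _ w.2 h5)
  have hFdense : Dense (Set.range Fi) := by
    have h1 : closure ((LinearMap.range ψ : Submodule ℂ Z) : Set Z) = Set.univ := by
      have h2 := congrArg (fun s : Submodule ℂ Z => (s : Set Z)) hψdense
      rwa [Submodule.topologicalClosure_coe, Submodule.top_coe] at h2
    rw [dense_iff_closure_eq]
    apply Set.eq_univ_of_univ_subset
    rw [← h1]
    apply closure_mono
    intro x hx
    obtain ⟨v, rfl⟩ := LinearMap.mem_range.mp hx
    exact hrange v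
  have hclosed : IsClosed (Set.range Fi) := Fi.isometry.isClosedEmbedding.isClosed_range
  have hsurj : Function.Surjective Fi := by
    have h1 := hFdense.closure_eq
    rw [hclosed.closure_eq] at h1
    exact Set.range_eq_univ.mp h1
  refine ⟨LinearIsometryEquiv.ofSurjective Fi hsurj, ?_⟩
  intro z hz h
  have hm : T z ∈ M := Submodule.mem_map_of_mem hz
  have hkey : (⟨T z, h⟩ : Z₀) = ι ⟨T z, hm⟩ := Subtype.ext rfl
  have hcoe : (LinearIsometryEquiv.ofSurjective Fi hsurj) ⟨T z, h⟩ = Fi ⟨T z, h⟩ := by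
    rw [LinearIsometryEquiv.coe_ofSurjective]
  rw [hcoe, hkey]
  show ((F (ι ⟨T z, hm⟩) : Z) : W) = S z
  rw [hFeq]
  show ((ψ (e.symm ⟨T z, hm⟩) : Z) : W) = S z
  have hesymm : e.symm ⟨T z, hm⟩ = ⟨z, hz⟩ := by
    rw [LinearEquiv.symm_apply_eq]
    exact Subtype.ext rfl
  rw [hesymm]
  exact hψcoe ⟨z, hz⟩

/-- For the positive square roots `S` of `A` and `S'` of `1 - A` one has `‖S y‖ = ‖P₀ y‖` and
`‖S' y‖ = ‖P₁ y‖` for all `y ∈ Y`; moreover there are unitaries `u₀ : Z₀ → Z` and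
`u₁ : Z₁ → Z` with `S z = u₀ (P₀ z)` and `S' z = u₁ (P₁ z)` for all `z ∈ Z`. -/
theorem stmt_6 (Y : Submodule ℂ (WithLp 2 (H₀ × H₁)))
    (hY : IsClosed (Y : Set (WithLp 2 (H₀ × H₁))))
    (A : Y →L[ℂ] Y)
    (hA : ∀ x y : Y,
      ⟪A x, y⟫_ℂ = ⟪P0 (x : WithLp 2 (H₀ × H₁)), P0 (y : WithLp 2 (H₀ × H₁))⟫_ℂ)
    (Y₀ Y₁ Z : Submodule ℂ Y)
    (hY₀ : Y₀ = LinearMap.ker ((1 - A : Y →L[ℂ] Y) : Y →ₗ[ℂ] Y)) (hY₁ : Y₁ = LinearMap.ker (A : Y →ₗ[ℂ] Y))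
    (hZ : Z = (Y₀ ⊔ Y₁)ᗮ)
    (Z₀ : Submodule ℂ H₀) (hZ₀ : Z₀ = (Submodule.map (P0 ∘ₗ Y.subtype) Z).topologicalClosure)
    (Z₁ : Submodule ℂ H₁) (hZ₁ : Z₁ = (Submodule.map (P1 ∘ₗ Y.subtype) Z).topologicalClosure) :
    (∀ S : Y →L[ℂ] Y, (∀ x y : Y, ⟪S x, y⟫_ℂ = ⟪x, S y⟫_ℂ) →
      (∀ x : Y, 0 ≤ (⟪S x, x⟫_ℂ).re) → S ∘L S = A →
      ((∀ y : Y, ‖S y‖ = ‖P0 (y : WithLp 2 (H₀ × H₁))‖) ∧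
        ∃ u₀ : Z₀ ≃ₗᵢ[ℂ] Z, ∀ z : Y, z ∈ Z →
          ∀ h : P0 (z : WithLp 2 (H₀ × H₁)) ∈ Z₀,
            ((u₀ ⟨P0 (z : WithLp 2 (H₀ × H₁)), h⟩ : Z) : Y) = S z)) ∧
    (∀ S : Y →L[ℂ] Y, (∀ x y : Y, ⟪S x, y⟫_ℂ = ⟪x, S y⟫_ℂ) →
      (∀ x : Y, 0 ≤ (⟪S x, x⟫_ℂ).re) → S ∘L S = 1 - A →
      ((∀ y : Y, ‖S y‖ = ‖P1 (y : WithLp 2 (H₀ × H₁))‖) ∧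
        ∃ u₁ : Z₁ ≃ₗᵢ[ℂ] Z, ∀ z : Y, z ∈ Z →
          ∀ h : P1 (z : WithLp 2 (H₀ × H₁)) ∈ Z₁,
            ((u₁ ⟨P1 (z : WithLp 2 (H₀ × H₁)), h⟩ : Z) : Y) = S z)) := by
  haveI : CompleteSpace Y := hY.completeSpace_coe
  have hZclosed : IsClosed (Z : Set Y) := by
    rw [hZ]; exact Submodule.isClosed_orthogonal _
  haveI : CompleteSpace Z := hZclosed.completeSpace_coe
  -- invariance of Z under any symmetric S commuting with A
  have invar : ∀ S : Y →L[ℂ] Y, (∀ x y : Y, ⟪S x, y⟫_ℂ = ⟪x, S y⟫_ℂ) →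
      (∀ y : Y, A (S y) = S (A y)) → ∀ z ∈ Z, S z ∈ Z := by
    intro S hsym hAS
    have hsup : ∀ u ∈ Y₀ ⊔ Y₁, S u ∈ Y₀ ⊔ Y₁ := by
      intro u hu
      rw [Submodule.mem_sup] at hu ⊢
      obtain ⟨v, hv, w, hw, rfl⟩ := hu
      refine ⟨S v, ?_, S w, ?_, (map_add S v w).symm⟩
      · rw [hY₀, LinearMap.mem_ker] at hv ⊢
        have hv' : A v = v := by
          have h1 : v - A v = 0 := by
            simpa [ContinuousLinearMap.sub_apply] using hv
          exact (sub_eq_zero.mp h1).symm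
        show (1 - A) (S v) = 0
        have h2 : (1 - A) (S v) = S v - A (S v) := by
          simp [ContinuousLinearMap.sub_apply]
        rw [h2, hAS, hv', sub_self]
      · rw [hY₁, LinearMap.mem_ker] at hw ⊢
        show A (S w) = 0
        rw [hAS, show A w = 0 from hw, map_zero]
    intro z hzZ
    have hz' : z ∈ (Y₀ ⊔ Y₁)ᗮ := hZ ▸ hzZ
    rw [hZ, Submodule.mem_orthogonal]
    intro u hu
    have h3 : ⟪u, S z⟫_ℂ = ⟪S u, z⟫_ℂ := by
      exact (inner_conj_symm (𝕜 := ℂ) u (S z)).symm.trans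
        ((congrArg (starRingEnd ℂ) (hsym z u)).trans (inner_conj_symm (𝕜 := ℂ) (S u) z))
    rw [h3]
    exact (Submodule.mem_orthogonal _ _).mp hz' (S u) (hsup u hu)
  have hker0 : ∀ z : Y, z ∈ Z → z ∈ Y₀ ⊔ Y₁ → z = 0 := by
    intro z hzZ hmem
    have hz' : z ∈ (Y₀ ⊔ Y₁)ᗮ := hZ ▸ hzZ
    exact inner_self_eq_zero.mp ((Submodule.mem_orthogonal _ _).mp hz' z hmem)
  constructor
  · -- case of A
    intro S hsym hpos hS2
    have hS2' : ∀ y : Y, S (S y) = A y := fun y =>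
      ContinuousLinearMap.ext_iff.mp hS2 y
    have hnorm : ∀ y : Y, ‖S y‖ = ‖P0 (y : WithLp 2 (H₀ × H₁))‖ := by
      intro y
      have h1 : ⟪S y, S y⟫_ℂ
          = ⟪P0 (y : WithLp 2 (H₀ × H₁)), P0 (y : WithLp 2 (H₀ × H₁))⟫_ℂ := by
        calc ⟪S y, S y⟫_ℂ = ⟪S (S y), y⟫_ℂ := (hsym (S y) y).symm
          _ = ⟪A y, y⟫_ℂ := by rw [hS2' y]
          _ = _ := hA y y
      have h2 : ‖S y‖ ^ 2 = ‖P0 (y : WithLp 2 (H₀ × H₁))‖ ^ 2 := by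
        rw [norm_sq_eq_re_inner (𝕜 := ℂ), norm_sq_eq_re_inner (𝕜 := ℂ), h1]
      have h3 := congrArg Real.sqrt h2
      rwa [Real.sqrt_sq (norm_nonneg _), Real.sqrt_sq (norm_nonneg _)] at h3
    have hAS : ∀ y : Y, A (S y) = S (A y) := by
      intro y
      calc A (S y) = S (S (S y)) := (hS2' (S y)).symm
        _ = S (A y) := congrArg S (hS2' y)
    refine ⟨hnorm, ?_⟩
    have hkerm : ∀ z ∈ Z, S z = 0 → z = 0 := by
      intro z hzZ h0
      have hAz : A z = 0 := by rw [← hS2', h0, map_zero]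
      exact hker0 z hzZ (Submodule.mem_sup_right (by
        rw [hY₁]; exact LinearMap.mem_ker.mpr hAz))
    exact key_lemma (P0 ∘ₗ Y.subtype) S Z (fun y => hnorm y) hsym
      (invar S hsym hAS) hkerm Z₀ hZ₀
  · -- case of 1 - A
    intro S hsym hpos hS2
    have hS2' : ∀ y : Y, S (S y) = y - A y := fun y => by
      have h := ContinuousLinearMap.ext_iff.mp hS2 y
      simpa [ContinuousLinearMap.sub_apply] using h
    have hnorm : ∀ y : Y, ‖S y‖ = ‖P1 (y : WithLp 2 (H₀ × H₁))‖ := by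
      intro y
      have h1 : ⟪S y, S y⟫_ℂ = ⟪y, y⟫_ℂ
          - ⟪P0 (y : WithLp 2 (H₀ × H₁)), P0 (y : WithLp 2 (H₀ × H₁))⟫_ℂ := by
        calc ⟪S y, S y⟫_ℂ = ⟪S (S y), y⟫_ℂ := (hsym (S y) y).symm
          _ = ⟪y - A y, y⟫_ℂ := by rw [hS2' y]
          _ = ⟪y, y⟫_ℂ - ⟪A y, y⟫_ℂ := inner_sub_left _ _ _
          _ = _ := by rw [hA]
      have h2 : ‖S y‖ ^ 2
          = ‖(y : WithLp 2 (H₀ × H₁))‖ ^ 2 - ‖P0 (y : WithLp 2 (H₀ × H₁))‖ ^ 2 := by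
        have h2a := congrArg (RCLike.re (K := ℂ)) h1
        rw [map_sub] at h2a
        rw [norm_sq_eq_re_inner (𝕜 := ℂ) (S y), h2a,
          ← norm_sq_eq_re_inner (𝕜 := ℂ)]
        congr 1
        rw [← Submodule.coe_norm]
        exact (norm_sq_eq_re_inner (𝕜 := ℂ) y).symm
      have h3 : ‖(y : WithLp 2 (H₀ × H₁))‖ ^ 2
          = ‖P0 (y : WithLp 2 (H₀ × H₁))‖ ^ 2 + ‖P1 (y : WithLp 2 (H₀ × H₁))‖ ^ 2 :=
        WithLp.prod_norm_sq_eq_of_L2 (y : WithLp 2 (H₀ × H₁))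
      have h4 : ‖S y‖ ^ 2 = ‖P1 (y : WithLp 2 (H₀ × H₁))‖ ^ 2 := by
        rw [h2, h3]; ring
      have h5 := congrArg Real.sqrt h4
      rwa [Real.sqrt_sq (norm_nonneg _), Real.sqrt_sq (norm_nonneg _)] at h5
    have hAS : ∀ y : Y, A (S y) = S (A y) := by
      intro y
      have ha : S (S (S y)) = S y - A (S y) := hS2' (S y)
      have hb : S (S (S y)) = S y - S (A y) := by
        calc S (S (S y)) = S (y - A y) := congrArg S (hS2' y)
          _ = S y - S (A y) := map_sub S _ _
      exact sub_right_injective (ha.symm.trans hb)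
    refine ⟨hnorm, ?_⟩
    have hkerm : ∀ z ∈ Z, S z = 0 → z = 0 := by
      intro z hzZ h0
      have hAz : z - A z = 0 := by rw [← hS2', h0, map_zero]
      refine hker0 z hzZ (Submodule.mem_sup_left (by
        rw [hY₀]
        refine LinearMap.mem_ker.mpr ?_
        show (1 - A) z = 0
        simpa [ContinuousLinearMap.sub_apply] using hAz))
    exact key_lemma (P1 ∘ₗ Y.subtype) S Z (fun y => hnorm y) hsym
      (invar S hsym hAS) hkerm Z₁ hZ₁
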